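/- Let n and N be positive integers and let R be a real N×n matrix. Consider the symmetric (n+N)×(n+N) block matrix K = [[Iₙ, −Rᵀ],[−R, 0]]. Then every eigenvalue λ of K satisfies: λ(λ−1) is an eigenvalue of R Rᵀ or λ(λ−1) is an eigenvalue of Rᵀ R. -/
import Mathlib


open Matrix

/-- Every eigenvalue `λ` of the symmetric block matrix
`K = [[Iₙ, −Rᵀ],[−R, 0]]` satisfies: `λ(λ−1)` is an eigenvalue of `R Rᵀ` or of `Rᵀ R`. -/
theorem block_eigenvalue_reduction {n N : ℕ} [NeZero n] [NeZero N]
    (R : Matrix (Fin N) (Fin n) ℝ)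
    (K : Matrix (Fin n ⊕ Fin N) (Fin n ⊕ Fin N) ℝ)
    (hK : K = Matrix.fromBlocks 1 (-Rᵀ) (-R) 0)
    (lam : ℝ) (x : (Fin n ⊕ Fin N) → ℝ) (hx : x ≠ 0) (hEig : K *ᵥ x = lam • x) :
    (∃ y : Fin N → ℝ, y ≠ 0 ∧ (R * Rᵀ) *ᵥ y = (lam * (lam - 1)) • y) ∨
    (∃ z : Fin n → ℝ, z ≠ 0 ∧ (Rᵀ * R) *ᵥ z = (lam * (lam - 1)) • z) := by
  set u : Fin n → ℝ := fun i => x (Sum.inl i) with hu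
  set v : Fin N → ℝ := fun j => x (Sum.inr j) with hv
  have hx' : x = Sum.elim u v := by
    funext i; cases i <;> rfl
  rw [hK, hx', fromBlocks_mulVec] at hEig
  have h1 : (1 : Matrix (Fin n) (Fin n) ℝ) *ᵥ u + (-Rᵀ) *ᵥ v = lam • u := by
    funext i; exact congrFun hEig (Sum.inl i)
  have h2 : (-R) *ᵥ u + (0 : Matrix (Fin N) (Fin N) ℝ) *ᵥ v = lam • v := by
    funext j; exact congrFun hEig (Sum.inr j)
  rw [one_mulVec, neg_mulVec] at h1
  rw [neg_mulVec, zero_mulVec, add_zero] at h2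
  have hRu : R *ᵥ u = -(lam • v) := by
    have := h2; rw [← neg_eq_iff_eq_neg]; exact this
  have hRtv : Rᵀ *ᵥ v = (1 - lam) • u := by
    have : Rᵀ *ᵥ v = u - lam • u := by
      rw [← h1]; abel
    rw [this, sub_smul, one_smul]
  by_cases hu0 : u = 0
  · -- then v ≠ 0 and lam • v = 0
    have hv0 : v ≠ 0 := by
      intro hv0
      apply hx
      rw [hx', hu0, hv0]
      funext i; cases i <;> rfl
    have hlamv : lam • v = 0 := by
      rw [← h2, hu0, mulVec_zero, neg_zero]
    have hlam : lam = 0 := by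
      by_contra hl
      exact hv0 (by simpa [smul_eq_zero, hl] using hlamv)
    left
    refine ⟨v, hv0, ?_⟩
    rw [← mulVec_mulVec, hRtv, hu0, smul_zero, mulVec_zero, hlam]
    simp
  · right
    refine ⟨u, hu0, ?_⟩
    rw [← mulVec_mulVec, hRu, mulVec_neg, mulVec_smul, hRtv, smul_smul]
    rw [← neg_smul]
    ring_nf
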